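/- Let n ≥ 2. For every m ≥ 1 the number a^≤_m(G_n) of subgroups of G_n of index m is finite, and the function m ↦ a^≤_m(G_n) is multiplicative: for all m₁, m₂ ≥ 1 with gcd(m₁,m₂) = 1, a^≤_{m₁m₂}(G_n) = a^≤_{m₁}(G_n)·a^≤_{m₂}(G_n). -/

import Mathlib

/-- The generator x_{i+1} (0-indexed `i : Fin (m+1)`), inside the free group. -/
def xgen {m : ℕ} (i : Fin (m + 1)) : FreeGroup (Fin (m + 1) ⊕ Fin m) :=
  FreeGroup.of (Sum.inl i)

/-- The generator y_{i+1} (0-indexed `i : Fin m`), inside the free group. -/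
def ygen {m : ℕ} (i : Fin m) : FreeGroup (Fin (m + 1) ⊕ Fin m) :=
  FreeGroup.of (Sum.inr i)

open scoped commutatorElement

/-- Relators of G_{m+1}: `[x_i,x_n]y_i⁻¹` (1 ≤ i ≤ n−1), `[x_i,x_j]` (1 ≤ i < j ≤ n−1),
and the commutators of each y_i with every generator (here n = m+1). -/
def grenhamRels (m : ℕ) : Set (FreeGroup (Fin (m + 1) ⊕ Fin m)) :=
  {r | (∃ i : Fin m, r = ⁅xgen i.castSucc, xgen (Fin.last m)⁆ * (ygen i)⁻¹) ∨
       (∃ i j : Fin m, i < j ∧ r = ⁅xgen i.castSucc, xgen j.castSucc⁆) ∨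
       (∃ (i : Fin m) (g : Fin (m + 1) ⊕ Fin m), r = ⁅ygen i, FreeGroup.of g⁆)}

/-- The group G_{m+1} (so `GrenhamGroup (n-1)` is the group G_n of the paper). -/
abbrev GrenhamGroup (m : ℕ) := PresentedGroup (grenhamRels m)



open Subgroup

private lemma eq_of_le_of_index_eq' {G : Type*} [Group G] {H K : Subgroup G} (h : H ≤ K)
    (heq : H.index = K.index) (hne : H.index ≠ 0) : H = K := by
  have h1 := relIndex_mul_index h
  rw [heq] at h1
  have hK : K.index ≠ 0 := heq ▸ hne
  have hone : H.relIndex K = 1 :=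
    Nat.eq_of_mul_eq_mul_right (Nat.pos_of_ne_zero hK) (h1.trans (one_mul K.index).symm)
  exact le_antisymm h (relIndex_eq_one.mp hone)

private lemma relIndex_mul_card_of_le {Q : Type*} [Group Q] [Finite Q] {K T : Subgroup Q}
    (h : K ≤ T) : K.relIndex T * Nat.card K = Nat.card T := by
  have h1 := Subgroup.index_mul_card (G := ↥T) (H := K.subgroupOf T)
  have h2 : Nat.card (K.subgroupOf T) = Nat.card K :=
    Nat.card_congr (subgroupOfEquivOfLe h).toEquiv
  rw [h2] at h1
  exact h1

private lemma relIndex_sup_dvd_card {Q : Type*} [Group Q] [Finite Q] (K S : Subgroup Q)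
    [S.Normal] : K.relIndex (K ⊔ S) ∣ Nat.card S := by
  have e := QuotientGroup.quotientInfEquivProdNormalQuotient K S
  have ht : S.relIndex K = S.relIndex (K ⊔ S) := by
    have := Nat.card_congr e.toEquiv
    simpa [Subgroup.relIndex, Subgroup.index] using this
  have h1 : K.relIndex (K ⊔ S) * Nat.card K = Nat.card ↥(K ⊔ S) :=
    relIndex_mul_card_of_le le_sup_left
  have h2 : S.relIndex (K ⊔ S) * Nat.card S = Nat.card ↥(K ⊔ S) :=
    relIndex_mul_card_of_le le_sup_right
  have h3 : S.relIndex K * Nat.card (S.subgroupOf K) = Nat.card K :=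
    Subgroup.index_mul_card (G := ↥K) (H := S.subgroupOf K)
  have hne : S.relIndex (K ⊔ S) ≠ 0 := Subgroup.index_ne_zero_of_finite
  refine ⟨Nat.card (S.subgroupOf K), ?_⟩
  have hbig : S.relIndex (K ⊔ S) * (K.relIndex (K ⊔ S) * Nat.card (S.subgroupOf K))
      = S.relIndex (K ⊔ S) * Nat.card S := by
    calc S.relIndex (K ⊔ S) * (K.relIndex (K ⊔ S) * Nat.card (S.subgroupOf K))
        = K.relIndex (K ⊔ S) * (S.relIndex K * Nat.card (S.subgroupOf K)) := by
          rw [ht]; ring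
      _ = K.relIndex (K ⊔ S) * Nat.card K := by rw [h3]
      _ = Nat.card ↥(K ⊔ S) := h1
      _ = S.relIndex (K ⊔ S) * Nat.card S := h2.symm
  exact (Nat.eq_of_mul_eq_mul_left (Nat.pos_of_ne_zero hne) hbig).symm

private lemma card_sup_dvd {Q : Type*} [Group Q] [Finite Q] (K S : Subgroup Q) [S.Normal] :
    Nat.card ↥(K ⊔ S) ∣ Nat.card K * Nat.card S := by
  obtain ⟨c, hc⟩ := relIndex_sup_dvd_card K S
  have h1 : K.relIndex (K ⊔ S) * Nat.card K = Nat.card ↥(K ⊔ S) :=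
    relIndex_mul_card_of_le le_sup_left
  exact ⟨c, by rw [← h1, hc]; ring⟩

private instance sylowFinite {Q : Type*} [Group Q] [Finite Q] (p : ℕ) : Finite (Sylow p Q) :=
  Finite.of_injective (fun P => (P : Subgroup Q)) fun _ _ h => Sylow.ext h

private lemma sylow_le_of_not_dvd_index {Q : Type*} [Group Q] [Finite Q] [Group.IsNilpotent Q]
    {p : ℕ} [Fact p.Prime] (P : Sylow p Q) (A : Subgroup Q) (h : ¬ p ∣ A.index) :
    (P : Subgroup Q) ≤ A := by
  haveI : (P : Subgroup Q).Normal :=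
    Sylow.normal_of_normalizerCondition (normalizerCondition_of_isNilpotent) P
  set r := A.relIndex (A ⊔ (P : Subgroup Q)) with hr
  have hr1 : r ∣ Nat.card (P : Subgroup Q) := relIndex_sup_dvd_card A _
  have hr2 : r ∣ A.index := ⟨(A ⊔ (P : Subgroup Q)).index, (relIndex_mul_index le_sup_left).symm⟩
  obtain ⟨k, hk⟩ := IsPGroup.exists_card_eq P.isPGroup'
  rw [hk] at hr1
  have hrone : r = 1 := by
    by_contra hne
    obtain ⟨q, hq, hqr⟩ := Nat.exists_prime_and_dvd hne
    have : q = p := by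
      have := hqr.trans hr1
      exact (Nat.prime_dvd_prime_iff_eq hq Fact.out).mp (hq.dvd_of_dvd_pow this)
    exact h (this ▸ hqr.trans hr2)
  exact le_sup_right.trans (relIndex_eq_one.mp hrone)

private lemma finite_key {Q : Type*} [Group Q] [Finite Q] [Group.IsNilpotent Q] {m₁ m₂ : ℕ}
    (hco : Nat.Coprime m₁ m₂) (K : Subgroup Q) (hK : K.index = m₁ * m₂) :
    ∃! B : Subgroup Q, K ≤ B ∧ B.index = m₁ := by
  classical
  have hm12 : m₁ * m₂ ≠ 0 := hK ▸ Subgroup.index_ne_zero_of_finite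
  have hm1 : m₁ ≠ 0 := fun h => hm12 (by simp [h])
  let syl : ℕ → Subgroup Q := fun q =>
    if h : q.Prime then (haveI := Fact.mk h; ((Sylow.nonempty (p := q) (G := Q)).some : Subgroup Q))
    else ⊥
  have syl_normal : ∀ q, (syl q).Normal := by
    intro q
    by_cases h : q.Prime
    · simp only [syl, dif_pos h]
      haveI := Fact.mk h
      exact Sylow.normal_of_normalizerCondition (normalizerCondition_of_isNilpotent) _
    · simp only [syl, dif_neg h]
      infer_instance
  have syl_card : ∀ q, q.Prime → ∃ k, Nat.card (syl q) = q ^ k := by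
    intro q hq
    haveI := Fact.mk hq
    simp only [syl, dif_pos hq]
    exact IsPGroup.exists_card_eq (Sylow.nonempty.some).isPGroup'
  have syl_not_dvd : ∀ q, q.Prime → ¬ q ∣ (syl q).index := by
    intro q hq
    haveI := Fact.mk hq
    simp only [syl, dif_pos hq]
    exact Sylow.not_dvd_index _
  set s : Finset ℕ := (Nat.card Q).primeFactors.filter (fun q => ¬ q ∣ m₁) with hs
  have main : ∀ t : Finset ℕ, (t.sup syl).Normal ∧
      Nat.card ↥(t.sup syl) ∣ ∏ q ∈ t, Nat.card (syl q) := by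
    intro t
    induction t using Finset.induction_on with
    | empty => exact ⟨by simp only [Finset.sup_empty]; infer_instance, by simp⟩
    | @insert a t ha ih =>
      haveI := ih.1
      haveI := syl_normal a
      constructor
      · rw [Finset.sup_insert]
        infer_instance
      · rw [Finset.sup_insert, Finset.prod_insert ha]
        exact (card_sup_dvd _ _).trans (mul_dvd_mul_left _ ih.2)
  set S : Subgroup Q := s.sup syl with hSdef
  haveI hSn : S.Normal := (main s).1
  have hScard : ∀ p, p.Prime → p ∣ Nat.card S → ¬ p ∣ m₁ := by
    intro p pp hdvd hpm
    have hprod : p ∣ ∏ q ∈ s, Nat.card (syl q) := hdvd.trans (main s).2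
    obtain ⟨q, hq, hpq⟩ := pp.prime.exists_mem_finset_dvd hprod
    have hqf := Finset.mem_filter.mp hq
    have pq : q.Prime := Nat.prime_of_mem_primeFactors hqf.1
    obtain ⟨k, hk⟩ := syl_card q pq
    rw [hk] at hpq
    have : p = q := (Nat.prime_dvd_prime_iff_eq pp pq).mp (pp.dvd_of_dvd_pow hpq)
    exact hqf.2 (this ▸ hpm)
  have hSindex : ∀ p, p.Prime → p ∣ S.index → p ∣ m₁ := by
    intro p pp hdvd
    by_contra hpm
    have hpQ : p ∣ Nat.card Q := hdvd.trans (Subgroup.index_dvd_card S)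
    have hps : p ∈ s := Finset.mem_filter.mpr
      ⟨Nat.mem_primeFactors.mpr ⟨pp, hpQ, Nat.card_pos.ne'⟩, hpm⟩
    have hle : syl p ≤ S := Finset.le_sup hps
    exact syl_not_dvd p pp (hdvd.trans (index_dvd_of_le hle)) |>.elim
  have hKS : (K ⊔ S).index = m₁ := by
    set d := (K ⊔ S).index with hd
    have hd0 : d ≠ 0 := Subgroup.index_ne_zero_of_finite
    have hdvd1 : d ∣ m₁ * m₂ := hK ▸ index_dvd_of_le le_sup_left
    have hcd : Nat.Coprime d m₂ := by
      by_contra h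
      obtain ⟨p, pp, hp⟩ := Nat.exists_prime_and_dvd h
      have hp1 : p ∣ d := hp.trans (Nat.gcd_dvd_left _ _)
      have hp2 : p ∣ m₂ := hp.trans (Nat.gcd_dvd_right _ _)
      have hpm1 : p ∣ m₁ := hSindex p pp (hp1.trans (index_dvd_of_le le_sup_right))
      exact pp.one_lt.ne' (Nat.eq_one_of_dvd_coprimes hco hpm1 hp2)
    have hdm1 : d ∣ m₁ := hcd.dvd_of_dvd_mul_right hdvd1
    have h5 : K.relIndex (K ⊔ S) * d = m₁ * m₂ := hK ▸ relIndex_mul_index le_sup_left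
    have hrS : K.relIndex (K ⊔ S) ∣ Nat.card S := relIndex_sup_dvd_card K S
    have hcr : Nat.Coprime m₁ (K.relIndex (K ⊔ S)) := by
      by_contra h
      obtain ⟨p, pp, hp⟩ := Nat.exists_prime_and_dvd h
      have hp1 : p ∣ m₁ := hp.trans (Nat.gcd_dvd_left _ _)
      have hp2 : p ∣ K.relIndex (K ⊔ S) := hp.trans (Nat.gcd_dvd_right _ _)
      exact hScard p pp (hp2.trans hrS) hp1
    have hm1d : m₁ ∣ d := by
      have : m₁ ∣ K.relIndex (K ⊔ S) * d := h5 ▸ dvd_mul_right m₁ m₂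
      exact hcr.dvd_of_dvd_mul_left this
    exact Nat.dvd_antisymm hdm1 hm1d
  refine ⟨K ⊔ S, ⟨le_sup_left, hKS⟩, ?_⟩
  rintro A ⟨hKA, hA⟩
  have hSA : S ≤ A := by
    refine Finset.sup_le fun q hq => ?_
    have hqs := Finset.mem_filter.mp hq
    have pq : q.Prime := Nat.prime_of_mem_primeFactors hqs.1
    haveI := Fact.mk pq
    have hnd : ¬ q ∣ A.index := by rw [hA]; exact hqs.2
    simp only [syl, dif_pos pq]
    exact sylow_le_of_not_dvd_index _ A hnd
  have hsub : K ⊔ S ≤ A := sup_le hKA hSA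
  exact (eq_of_le_of_index_eq' hsub (hKS.trans hA.symm) (by rw [hKS]; exact hm1)).symm

private lemma key {G : Type*} [Group G] [Group.IsNilpotent G] {m₁ m₂ : ℕ}
    (hco : Nat.Coprime m₁ m₂) (H : Subgroup G) (hH : H.index = m₁ * m₂)
    (hne : m₁ * m₂ ≠ 0) : ∃! A : Subgroup G, H ≤ A ∧ A.index = m₁ := by
  haveI : H.FiniteIndex := ⟨hH ▸ hne⟩
  set N := H.normalCore with hN
  haveI : N.FiniteIndex := Subgroup.finiteIndex_normalCore H
  haveI : Finite (G ⧸ N) := by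
    apply Nat.finite_of_card_ne_zero
    rw [← Subgroup.index_eq_card]
    exact Subgroup.FiniteIndex.index_ne_zero
  set π := QuotientGroup.mk' N with hπdef
  have hπ : Function.Surjective π := QuotientGroup.mk'_surjective N
  have hker : π.ker = N := QuotientGroup.ker_mk' N
  have hNH : N ≤ H := normalCore_le H
  set K := H.map π with hKdef
  have hKi : K.index = m₁ * m₂ := by
    rw [hKdef, Subgroup.index_map_eq H hπ (by rw [hker]; exact hNH), hH]
  obtain ⟨B, ⟨hKB, hBi⟩, hBu⟩ := finite_key hco K hKi
  refine ⟨B.comap π, ⟨?_, ?_⟩, ?_⟩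
  · exact (Subgroup.le_comap_map π H).trans (comap_mono hKB)
  · rw [index_comap_of_surjective _ hπ, hBi]
  · rintro A ⟨hHA, hAi⟩
    have hNA : N ≤ A := hNH.trans hHA
    have hBeq : A.map π = B := hBu (A.map π)
      ⟨map_mono hHA, by rw [Subgroup.index_map_eq A hπ (by rw [hker]; exact hNA), hAi]⟩
    rw [← hBeq, comap_map_eq, hker, sup_of_le_left hNA]

private lemma index_inf' {G : Type*} [Group G] {A B : Subgroup G} {m₁ m₂ : ℕ}
    (hco : Nat.Coprime m₁ m₂) (hA : A.index = m₁) (hB : B.index = m₂)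
    (h1 : m₁ ≠ 0) (h2 : m₂ ≠ 0) : (A ⊓ B).index = m₁ * m₂ := by
  haveI : A.FiniteIndex := ⟨hA ▸ h1⟩
  haveI : B.FiniteIndex := ⟨hB ▸ h2⟩
  have hdvd : m₁ * m₂ ∣ (A ⊓ B).index :=
    Nat.Coprime.mul_dvd_of_dvd_of_dvd hco (hA ▸ index_dvd_of_le inf_le_left)
      (hB ▸ index_dvd_of_le inf_le_right)
  have hle : (A ⊓ B).index ≤ m₁ * m₂ := by
    rw [← hA, ← hB]; exact index_inf_le
  have hne : (A ⊓ B).index ≠ 0 := Subgroup.FiniteIndex.index_ne_zero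
  exact le_antisymm hle (Nat.le_of_dvd (Nat.pos_of_ne_zero hne) hdvd)

private def permHom {α β : Type*} (e : α ≃ β) : Equiv.Perm α →* Equiv.Perm β where
  toFun σ := e.permCongr σ
  map_one' := by ext b; simp
  map_mul' σ τ := by ext b; simp [Equiv.permCongr_apply]

private lemma finite_subgroups_of_index {G : Type*} [Group G] [Group.FG G] (m : ℕ)
    (hm : m ≠ 0) : Finite {H : Subgroup G // H.index = m} := by
  classical
  obtain ⟨S, hSc, hSf⟩ := Group.fg_iff.mp (inferInstance : Group.FG G)
  haveI : Finite S := hSf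
  have hfin : ∀ H : {H : Subgroup G // H.index = m}, Finite (G ⧸ H.1) := fun H => by
    apply Nat.finite_of_card_ne_zero
    rw [← Subgroup.index_eq_card, H.2]
    exact hm
  have he : ∀ H : {H : Subgroup G // H.index = m}, Nonempty (G ⧸ H.1 ≃ Fin m) := fun H => by
    haveI := hfin H
    haveI := Fintype.ofFinite (G ⧸ H.1)
    exact ⟨Fintype.equivFinOfCardEq (by rw [← Nat.card_eq_fintype_card, ← Subgroup.index_eq_card,
      H.2])⟩
  let e : ∀ H : {H : Subgroup G // H.index = m}, G ⧸ H.1 ≃ Fin m := fun H => (he H).some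
  let φ : ∀ H : {H : Subgroup G // H.index = m}, G →* Equiv.Perm (Fin m) := fun H =>
    (permHom (e H)).comp (MulAction.toPermHom G (G ⧸ H.1))
  let F : {H : Subgroup G // H.index = m} → (S → Equiv.Perm (Fin m)) × Fin m := fun H =>
    (fun s => φ H s, e H ((1 : G) : G ⧸ H.1))
  have key : ∀ (H : {H : Subgroup G // H.index = m}) (g : G),
      g ∈ H.1 ↔ φ H g (e H ((1 : G) : G ⧸ H.1)) = e H ((1 : G) : G ⧸ H.1) := by
    intro H g
    have h1 : φ H g (e H ((1 : G) : G ⧸ H.1)) = e H (g • ((1 : G) : G ⧸ H.1)) := by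
      simp [φ, permHom, Equiv.permCongr_apply]
    rw [h1]
    constructor
    · intro hg
      have : g ∈ MulAction.stabilizer G ((1 : G) : G ⧸ H.1) := by
        rw [MulAction.stabilizer_quotient]; exact hg
      rw [MulAction.mem_stabilizer_iff] at this
      rw [this]
    · intro hg
      have : g • ((1 : G) : G ⧸ H.1) = ((1 : G) : G ⧸ H.1) := (e H).injective hg
      have : g ∈ MulAction.stabilizer G ((1 : G) : G ⧸ H.1) := this
      rwa [MulAction.stabilizer_quotient] at this
  apply Finite.of_injective F
  intro H H' hEq
  have h1 : (fun s : S => φ H s) = fun s : S => φ H' s := congrArg Prod.fst hEq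
  have h2 : (e H ((1 : G) : G ⧸ H.1) : Fin m) = e H' ((1 : G) : G ⧸ H'.1) :=
    congrArg Prod.snd hEq
  have hφ : φ H = φ H' := MonoidHom.eq_of_eqOn_dense hSc fun x hx =>
    congrFun h1 ⟨x, hx⟩
  apply Subtype.ext
  ext g
  rw [key H g, key H' g, hφ, h2]

private lemma card_mul_of_nilpotent {G : Type*} [Group G] [Group.IsNilpotent G] {m₁ m₂ : ℕ}
    (h1 : m₁ ≠ 0) (h2 : m₂ ≠ 0) (hco : Nat.Coprime m₁ m₂) :
    Nat.card {H : Subgroup G // H.index = m₁ * m₂} =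
      Nat.card {H : Subgroup G // H.index = m₁} * Nat.card {H : Subgroup G // H.index = m₂} := by
  classical
  have hne : m₁ * m₂ ≠ 0 := mul_ne_zero h1 h2
  have k1 : ∀ H : {H : Subgroup G // H.index = m₁ * m₂}, ∃! A, H.1 ≤ A ∧ A.index = m₁ :=
    fun H => key hco H.1 H.2 hne
  have k2 : ∀ H : {H : Subgroup G // H.index = m₁ * m₂}, ∃! A, H.1 ≤ A ∧ A.index = m₂ :=
    fun H => key hco.symm H.1 (by rw [H.2, mul_comm]) (by rwa [mul_comm])
  choose f₁ hf₁ hu₁ using k1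
  choose f₂ hf₂ hu₂ using k2
  refine (Nat.card_congr ?_).trans (Nat.card_prod _ _)
  refine ⟨fun H => (⟨f₁ H, (hf₁ H).2⟩, ⟨f₂ H, (hf₂ H).2⟩),
    fun P => ⟨P.1.1 ⊓ P.2.1, index_inf' hco P.1.2 P.2.2 h1 h2⟩, ?_, ?_⟩
  · intro H
    apply Subtype.ext
    exact (eq_of_le_of_index_eq' (le_inf (hf₁ H).1 (hf₂ H).1)
      (by rw [H.2, index_inf' hco (hf₁ H).2 (hf₂ H).2 h1 h2]) (by rw [H.2]; exact hne)).symm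
  · intro P
    have hP : ∀ (pf : (P.1.1 ⊓ P.2.1).index = m₁ * m₂),
        f₁ ⟨P.1.1 ⊓ P.2.1, pf⟩ = P.1.1 ∧ f₂ ⟨P.1.1 ⊓ P.2.1, pf⟩ = P.2.1 := by
      intro pf
      constructor
      · exact (hu₁ ⟨_, pf⟩ P.1.1 ⟨inf_le_left, P.1.2⟩).symm
      · exact (hu₂ ⟨_, pf⟩ P.2.1 ⟨inf_le_right, P.2.2⟩).symm
    obtain ⟨e1, e2⟩ := hP (index_inf' hco P.1.2 P.2.2 h1 h2)
    exact Prod.ext (Subtype.ext e1) (Subtype.ext e2)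

private lemma grenham_fg (m : ℕ) : Group.FG (GrenhamGroup m) := by
  haveI : Group.FG (FreeGroup (Fin (m + 1) ⊕ Fin m)) :=
    Group.fg_iff.mpr ⟨Set.range FreeGroup.of, FreeGroup.closure_range_of _, Set.finite_range _⟩
  exact Group.fg_of_surjective (PresentedGroup.mk_surjective (grenhamRels m))

private lemma mk_rel_one (m : ℕ) {r : FreeGroup (Fin (m + 1) ⊕ Fin m)} (hr : r ∈ grenhamRels m) :
    PresentedGroup.mk (grenhamRels m) r = 1 := by
  have h1 : r ∈ Subgroup.normalClosure (grenhamRels m) := Subgroup.subset_normalClosure hr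
  exact (QuotientGroup.eq_one_iff r).mpr h1

private lemma y_central (m : ℕ) (i : Fin m) :
    PresentedGroup.of (rels := grenhamRels m) (Sum.inr i) ∈
      Subgroup.center (GrenhamGroup m) := by
  rw [Subgroup.mem_center_iff]
  intro g
  have hg : g ∈ Subgroup.centralizer {PresentedGroup.of (rels := grenhamRels m) (Sum.inr i)} := by
    apply PresentedGroup.generated_by
    intro j
    rw [Subgroup.mem_centralizer_iff]
    rintro z hz
    rw [Set.mem_singleton_iff] at hz
    subst hz
    have hrel : ⁅ygen i, FreeGroup.of j⁆ ∈ grenhamRels m := Or.inr (Or.inr ⟨i, j, rfl⟩)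
    have h2 := mk_rel_one m hrel
    rw [map_commutatorElement] at h2
    exact (commutatorElement_eq_one_iff_commute.mp h2).eq
  rw [Subgroup.mem_centralizer_iff] at hg
  exact (hg _ (Set.mem_singleton _)).symm

private lemma comm_gen_central (m : ℕ) (u v : Fin (m + 1) ⊕ Fin m) :
    ⁅PresentedGroup.of (rels := grenhamRels m) u, PresentedGroup.of v⁆ ∈
      Subgroup.center (GrenhamGroup m) := by
  have hxx : ∀ a b : Fin m, a < b →
      (⁅PresentedGroup.of (rels := grenhamRels m) (Sum.inl a.castSucc),
        PresentedGroup.of (rels := grenhamRels m) (Sum.inl b.castSucc)⁆ = 1) := by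
    intro a b hab
    have hrel : ⁅xgen a.castSucc, xgen b.castSucc⁆ ∈ grenhamRels m :=
      Or.inr (Or.inl ⟨a, b, hab, rfl⟩)
    have h2 := mk_rel_one m hrel
    rwa [map_commutatorElement] at h2
  have hxl : ∀ a : Fin m,
      ⁅PresentedGroup.of (rels := grenhamRels m) (Sum.inl a.castSucc),
        PresentedGroup.of (rels := grenhamRels m) (Sum.inl (Fin.last m))⁆ =
        PresentedGroup.of (rels := grenhamRels m) (Sum.inr a) := by
    intro a
    have hrel : ⁅xgen a.castSucc, xgen (Fin.last m)⁆ * (ygen a)⁻¹ ∈ grenhamRels m :=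
      Or.inl ⟨a, rfl⟩
    have h2 := mk_rel_one m hrel
    rw [map_mul, map_inv, map_commutatorElement, mul_inv_eq_one] at h2
    exact h2
  obtain (i | i) := u
  · obtain (j | j) := v
    · by_cases hi : i = Fin.last m
      · by_cases hj : j = Fin.last m
        · subst hi; subst hj; rw [commutatorElement_self]; exact one_mem _
        · obtain ⟨j', rfl⟩ := Fin.eq_castSucc_of_ne_last hj
          subst hi
          rw [← commutatorElement_inv, hxl j']
          exact (Subgroup.center _).inv_mem (y_central m j')
      · obtain ⟨i', rfl⟩ := Fin.eq_castSucc_of_ne_last hi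
        by_cases hj : j = Fin.last m
        · subst hj; rw [hxl i']; exact y_central m i'
        · obtain ⟨j', rfl⟩ := Fin.eq_castSucc_of_ne_last hj
          rcases lt_trichotomy i' j' with h | h | h
          · rw [hxx i' j' h]; exact one_mem _
          · subst h; rw [commutatorElement_self]; exact one_mem _
          · have h1 := hxx j' i' h
            rw [commutatorElement_eq_one_iff_commute] at h1
            rw [commutatorElement_eq_one_iff_commute.mpr h1.symm]
            exact one_mem _
    · have hc : Commute (PresentedGroup.of (rels := grenhamRels m) (Sum.inl i))
          (PresentedGroup.of (Sum.inr j)) :=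
        Subgroup.mem_center_iff.mp (y_central m j) _
      rw [commutatorElement_eq_one_iff_commute.mpr hc]
      exact one_mem _
  · have hc : Commute (PresentedGroup.of (rels := grenhamRels m) (Sum.inr i))
        (PresentedGroup.of v) :=
      (Subgroup.mem_center_iff.mp (y_central m i) _).symm
    rw [commutatorElement_eq_one_iff_commute.mpr hc]
    exact one_mem _

private lemma grenham_nilpotent (m : ℕ) : Group.IsNilpotent (GrenhamGroup m) := by
  set Z := Subgroup.center (GrenhamGroup m) with hZ
  have hcomm : ∀ a b : GrenhamGroup m, ⁅a, b⁆ ∈ Z := by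
    set π := QuotientGroup.mk' Z with hπdef
    have hπ : Function.Surjective π := QuotientGroup.mk'_surjective Z
    have hgen : Subgroup.closure
        (Set.range (fun u : Fin (m + 1) ⊕ Fin m => π (PresentedGroup.of u))) = ⊤ := by
      have h1 : Set.range (fun u : Fin (m + 1) ⊕ Fin m => π (PresentedGroup.of u)) =
          π '' (Set.range (PresentedGroup.of (rels := grenhamRels m))) := by
        rw [← Set.range_comp]; rfl
      rw [h1, ← MonoidHom.map_closure, PresentedGroup.closure_range_of]
      exact Subgroup.map_top_of_surjective π hπ
    have hbase : ∀ x y, x ∈ Set.range (fun u : Fin (m + 1) ⊕ Fin m => π (PresentedGroup.of u)) →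
        y ∈ Set.range (fun u : Fin (m + 1) ⊕ Fin m => π (PresentedGroup.of u)) →
        Commute x y := by
      rintro _ _ ⟨u, rfl⟩ ⟨v, rfl⟩
      rw [← commutatorElement_eq_one_iff_commute, ← map_commutatorElement]
      exact (QuotientGroup.eq_one_iff _).mpr (comm_gen_central m u v)
    have hcommQ : ∀ x y : GrenhamGroup m ⧸ Z, Commute x y := by
      intro x y
      refine Subgroup.closure_induction₂ (p := fun x y _ _ => Commute x y)
        (fun x y hx hy => hbase x y hx hy)
        (fun x _ => Commute.one_left x) (fun x _ => Commute.one_right x)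
        (fun x y z _ _ _ h1 h2 => h1.mul_left h2)
        (fun y z x _ _ _ h1 h2 => h1.mul_right h2)
        (fun x y _ _ h => h.inv_left) (fun x y _ _ h => h.inv_right)
        (hgen ▸ Subgroup.mem_top x) (hgen ▸ Subgroup.mem_top y)
    intro a b
    have h1 : π ⁅a, b⁆ = 1 := by
      rw [map_commutatorElement]
      exact commutatorElement_eq_one_iff_commute.mpr (hcommQ (π a) (π b))
    exact (QuotientGroup.eq_one_iff _).mp h1
  have hle : commutator (GrenhamGroup m) ≤ Z := by
    rw [_root_.commutator_def]
    exact Subgroup.commutator_le.mpr fun a _ b _ => hcomm a b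
  refine _root_.isNilpotent_of_ker_le_center (Abelianization.of (G := GrenhamGroup m)) ?_
  intro x hx
  rw [MonoidHom.mem_ker] at hx
  exact hle ((QuotientGroup.eq_one_iff x).mp hx)

theorem subgroup_count_finite_and_multiplicative (n : ℕ) (hn : 2 ≤ n) :
    (∀ m : ℕ, 1 ≤ m → Finite {H : Subgroup (GrenhamGroup (n - 1)) // H.index = m}) ∧
    ∀ m₁ m₂ : ℕ, 1 ≤ m₁ → 1 ≤ m₂ → Nat.gcd m₁ m₂ = 1 →
      Nat.card {H : Subgroup (GrenhamGroup (n - 1)) // H.index = m₁ * m₂} =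
        Nat.card {H : Subgroup (GrenhamGroup (n - 1)) // H.index = m₁} *
          Nat.card {H : Subgroup (GrenhamGroup (n - 1)) // H.index = m₂} := by
  haveI := grenham_fg (n - 1)
  haveI := grenham_nilpotent (n - 1)
  constructor
  · intro m hm
    exact finite_subgroups_of_index m (by omega)
  · intro m₁ m₂ h1 h2 hco
    exact card_mul_of_nilpotent (by omega) (by omega) hco
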